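/- Let C_n be the cycle graph on n ≥ 3 vertices with the shortest-path metric. Then the least doubling constant over all measures giving positive mass to each vertex equals 3: every such measure μ satisfies C_μ ≥ 3, and the counting measure achieves C_μ = 3. -/

import Mathlib

open MeasureTheory Metric Filter

noncomputable def doublingConstant {X : Type*} [PseudoMetricSpace X] [MeasurableSpace X]
    (μ : Measure X) : ENNReal :=
  ⨆ (x : X) (r : ℝ) (_ : 0 < r), μ (ball x (2 * r)) / μ (ball x r)
theorem stmt_18 {X : Type*} [MetricSpace X] [MeasurableSpace X] [BorelSpace X]
    (n : ℕ) (hn : 3 ≤ n) (x : Fin n → X) (hbij : Function.Bijective x)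
    (hdist : ∀ i j : Fin n,
      dist (x i) (x j) =
        (min ((i.val : ℤ) - j.val).natAbs (n - ((i.val : ℤ) - j.val).natAbs) : ℕ)) :
    (∀ μ : Measure X, (∀ a : X, 0 < μ {a}) → μ Set.univ < ⊤ →
      (3 : ENNReal) ≤ doublingConstant μ) ∧
    doublingConstant (Measure.count : Measure X) = 3 := by
  have hn0 : 0 < n := by omega
  haveI : NeZero n := ⟨by omega⟩
  haveI : MeasurableSingletonClass X :=
    ⟨fun a => IsClosed.measurableSet isClosed_singleton⟩
  haveI : Finite X := Finite.of_surjective x hbij.2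
  -- mod elimination helper
  have modfact : ∀ a : ℕ, a < 2 * n → (a < n ∧ a % n = a) ∨ (n ≤ a ∧ a % n = a - n) := by
    intro a ha
    rcases lt_or_ge a n with h | h
    · exact Or.inl ⟨h, Nat.mod_eq_of_lt h⟩
    · refine Or.inr ⟨h, ?_⟩
      rw [Nat.mod_eq_sub_mod h, Nat.mod_eq_of_lt (by omega)]
  -- distance in terms of Fin subtraction
  have key : ∀ i j : Fin n,
      dist (x j) (x i) = ((min (j - i).val (n - (j - i).val) : ℕ) : ℝ) := by
    intro i j
    rw [hdist j i]
    congr 1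
    have hv : (j - i).val = (n - i.val + j.val) % n := by rw [Fin.sub_def]
    have hj := j.isLt; have hi := i.isLt
    rcases modfact (n - i.val + j.val) (by omega) with ⟨h1, h2⟩ | ⟨h1, h2⟩ <;> omega
  -- balls as images
  have hball : ∀ (i : Fin n) (r : ℝ),
      ball (x i) r = x '' {j | ((min (j - i).val (n - (j - i).val) : ℕ) : ℝ) < r} := by
    intro i r
    ext y
    obtain ⟨j, rfl⟩ := hbij.2 y
    rw [mem_ball, key, hbij.1.mem_set_image]
    rfl
  -- the point at "distance one"
  set o : Fin n := ⟨1, by omega⟩ with ho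
  have hov : (o : Fin n).val = 1 := rfl
  have hnegov : (-o).val = n - 1 := by
    rw [Fin.neg_def]
    simp only [hov]
    exact Nat.mod_eq_of_lt (by omega)
  have ho0 : o ≠ 0 := by
    intro h; have := congrArg Fin.val h; simp [hov] at this
  -- ball of radius 1 is a singleton
  have hb1 : ∀ i : Fin n, ball (x i) 1 = {x i} := by
    intro i
    rw [hball]
    have : {j : Fin n | ((min (j - i).val (n - (j - i).val) : ℕ) : ℝ) < 1} = {i} := by
      ext j
      simp only [Set.mem_setOf_eq, Set.mem_singleton_iff]
      rw [show ((min (j - i).val (n - (j - i).val) : ℕ) : ℝ) < 1 ↔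
          (min (j - i).val (n - (j - i).val) : ℕ) < 1 by exact_mod_cast Iff.rfl]
      constructor
      · intro h
        have hv := (j - i).isLt
        have : (j - i).val = 0 := by omega
        have : j - i = 0 := Fin.ext this
        have := sub_eq_zero.mp this
        exact this
      · rintro rfl
        simp
    rw [this, Set.image_singleton]
  -- the three points around i are in ball of radius 2
  have hb2 : ∀ i : Fin n, ({x (i - o)} ∪ ({x i} ∪ {x (i + o)}) : Set X) ⊆ ball (x i) 2 := by
    intro i y hy
    have hd1 : dist (x (i + o)) (x i) = ((min o.val (n - o.val) : ℕ) : ℝ) := by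
      rw [key]; congr 2 <;> rw [add_sub_cancel_left]
    have hd2 : dist (x (i - o)) (x i) = ((min (-o).val (n - (-o).val) : ℕ) : ℝ) := by
      rw [key]; congr 2 <;> rw [sub_sub_cancel_left]
    rcases hy with hy | hy | hy <;> rw [Set.mem_singleton_iff] at hy <;> subst hy <;>
      rw [mem_ball]
    · rw [hd2, hnegov]
      have : min (n - 1) (n - (n - 1)) = 1 := by omega
      rw [this]; norm_num
    · simp
    · rw [hd1, hov]
      have : min 1 (n - 1) = 1 := by omega
      rw [this]; norm_num
  -- the three points are distinct
  have hdistinct : ∀ i : Fin n, x (i - o) ≠ x i ∧ x (i - o) ≠ x (i + o) ∧ x i ≠ x (i + o) := by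
    intro i
    refine ⟨fun h => ?_, fun h => ?_, fun h => ?_⟩ <;> have h' := hbij.1 h
    · have := congrArg (· - i) h'
      simp only [sub_sub_cancel_left, sub_self] at this
      exact ho0 (neg_eq_zero.mp this)
    · have := congrArg (· - i) h'
      simp only [sub_sub_cancel_left, add_sub_cancel_left] at this
      have := congrArg Fin.val this
      rw [hnegov, hov] at this
      omega
    · have := congrArg (· - i) h'
      simp only [sub_self, add_sub_cancel_left] at this
      exact ho0 this.symm
  -- Part 1
  have P1 : ∀ μ : Measure X, (∀ a : X, 0 < μ {a}) → μ Set.univ < ⊤ →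
      (3 : ENNReal) ≤ doublingConstant μ := by
    intro μ hpos hfin
    obtain ⟨i₀, -, hmin⟩ := Finset.exists_min_image Finset.univ (fun i => μ {x i})
      ⟨0, Finset.mem_univ 0⟩
    obtain ⟨h1, h2, h3⟩ := hdistinct i₀
    have hsum : μ ({x (i₀ - o)} ∪ ({x i₀} ∪ {x (i₀ + o)}) : Set X)
        = μ {x (i₀ - o)} + (μ {x i₀} + μ {x (i₀ + o)}) := by
      rw [measure_union (by simp [Set.disjoint_singleton, h1, h2])
        ((measurableSet_singleton _).union (measurableSet_singleton _)),
        measure_union (by simp [Set.disjoint_singleton, h3]) (measurableSet_singleton _)]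
    have hb : μ {x i₀} ≠ 0 := (hpos _).ne'
    have hbt : μ {x i₀} ≠ ⊤ := ((measure_mono (Set.subset_univ _)).trans_lt hfin).ne
    have h3b : (3 : ENNReal) * μ {x i₀} ≤ μ (ball (x i₀) (2 * 1)) := by
      have : (3 : ENNReal) * μ {x i₀} = μ {x i₀} + (μ {x i₀} + μ {x i₀}) := by ring
      rw [this, show (2 : ℝ) * 1 = 2 by norm_num]
      refine le_trans ?_ (measure_mono (hb2 i₀))
      rw [hsum]
      exact add_le_add (hmin _ (Finset.mem_univ _))
        (add_le_add le_rfl (hmin _ (Finset.mem_univ _)))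
    have hterm : (3 : ENNReal) ≤ μ (ball (x i₀) (2 * 1)) / μ (ball (x i₀) 1) := by
      rw [hb1, ENNReal.le_div_iff_mul_le (Or.inl hb) (Or.inl hbt)]
      exact h3b
    refine hterm.trans ?_
    exact le_iSup_of_le (x i₀) <| le_iSup_of_le 1 <| le_iSup_of_le one_pos le_rfl
  refine ⟨P1, le_antisymm ?_ (P1 _ (fun a => by simp) (measure_lt_top _ _))⟩
  -- Part 2: upper bound
  rw [doublingConstant]
  refine iSup_le fun a => iSup_le fun r => iSup_le fun hr => ?_
  obtain ⟨i, rfl⟩ := hbij.2 a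
  set m := ⌈r⌉₊ with hm
  have hm1 : 1 ≤ m := Nat.ceil_pos.mpr hr
  have hrm : ∀ d : ℕ, (d : ℝ) < r ↔ d < m := fun d => Nat.lt_ceil.symm
  have h2r : ∀ d : ℕ, (d : ℝ) < 2 * r → d < 2 * m := by
    intro d hd
    have : d < ⌈2 * r⌉₊ := Nat.lt_ceil.mpr hd
    have h2 : ⌈2 * r⌉₊ ≤ 2 * m := by
      rw [two_mul, two_mul]
      exact Nat.ceil_add_le r r
    omega
  set S : Fin n → Set (Fin n) := fun c => {j | min (j - c).val (n - (j - c).val) < m}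
    with hS
  have hballS : ∀ c : Fin n, ball (x c) r = x '' S c := by
    intro c
    rw [hball]
    refine congrArg (Set.image x) ?_
    ext j
    simp only [Set.mem_setOf_eq, hS]
    exact hrm _
  have hcount : ∀ c : Fin n, Measure.count (ball (x c) r) = Measure.count (S c) := by
    intro c; rw [hballS, Measure.count_injective_image hbij.1]
  -- rotation invariance of counts
  have him : ∀ c k : Fin n, S (c + k) = (· + k) '' S c := by
    intro c k
    ext j
    constructor
    · intro hj
      refine ⟨j - k, ?_, sub_add_cancel j k⟩
      simp only [hS, Set.mem_setOf_eq] at hj ⊢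
      rw [sub_sub, add_comm k c]
      exact hj
    · rintro ⟨p, hp, rfl⟩
      simp only [hS, Set.mem_setOf_eq] at hp ⊢
      rwa [add_sub_add_right_eq_sub]
  have hrot : ∀ c : Fin n, Measure.count (S c) = Measure.count (S i) := by
    intro c
    have h1 : i + (c - i) = c := by rw [add_comm, sub_add_cancel]
    calc Measure.count (S c) = Measure.count ((· + (c - i)) '' S i) := by rw [← him, h1]
      _ = Measure.count (S i) := Measure.count_injective_image (add_left_injective _) _
  -- denominator facts
  have hSne : Measure.count (S i) ≠ 0 := by
    rw [Ne, Measure.count_eq_zero_iff]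
    intro h
    have : i ∈ S i := by
      simp only [hS, Set.mem_setOf_eq, sub_self]
      have : (0 : Fin n).val = 0 := rfl
      omega
    rw [h] at this; exact this
  have hSt : Measure.count (S i) ≠ ⊤ := (Measure.count_apply_lt_top.mpr (Set.toFinite _)).ne
  rw [hcount, ENNReal.div_le_iff hSne hSt]
  -- numerator bound
  rw [hball]
  rw [Measure.count_injective_image hbij.1]
  set S2 : Set (Fin n) := {j | ((min (j - i).val (n - (j - i).val) : ℕ) : ℝ) < 2 * r} with hS2
  have hS2sub : ∀ j ∈ S2, min (j - i).val (n - (j - i).val) < 2 * m := by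
    intro j hj; exact h2r _ hj
  rcases lt_or_ge n (2 * m) with hcase | hcase
  · -- small n : S i = univ
    have huniv : S i = Set.univ := by
      ext j
      simp only [hS, Set.mem_setOf_eq, Set.mem_univ, iff_true]
      have := (j - i).isLt
      omega
    calc Measure.count S2 ≤ Measure.count (S i) := by
          rw [huniv]; exact measure_mono (Set.subset_univ _)
      _ ≤ 3 * Measure.count (S i) :=
          le_mul_of_one_le_left zero_le (by norm_num)
  · -- large n : cover by three balls
    have hmlt : m < n := by omega
    set mf : Fin n := ⟨m, hmlt⟩ with hmf
    have hcov : S2 ⊆ S i ∪ (S (i + mf) ∪ S (i - mf)) := by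
      intro j hj
      have hmin := hS2sub j hj
      set s := (j - i).val with hs
      have hsn : s < n := (j - i).isLt
      have hv1 : (j - (i + mf)).val = (n - m + s) % n := by
        have h : j - (i + mf) = (j - i) - mf := by abel
        rw [h, Fin.sub_def]
      have hv2 : (j - (i - mf)).val = (s + m) % n := by
        have h : j - (i - mf) = (j - i) + mf := by abel
        rw [h, Fin.add_def]
      simp only [Set.mem_union, hS, Set.mem_setOf_eq, ← hs, hv1, hv2]
      rcases modfact (n - m + s) (by omega) with ⟨ha1, ha2⟩ | ⟨ha1, ha2⟩ <;>
        rcases modfact (s + m) (by omega) with ⟨hb1, hb2⟩ | ⟨hb1, hb2⟩ <;> omega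
    calc Measure.count S2 ≤ Measure.count (S i ∪ (S (i + mf) ∪ S (i - mf))) :=
          measure_mono hcov
      _ ≤ Measure.count (S i) + (Measure.count (S (i + mf)) + Measure.count (S (i - mf))) :=
          le_trans (measure_union_le _ _) (by gcongr; exact measure_union_le _ _)
      _ = 3 * Measure.count (S i) := by rw [hrot (i + mf), hrot (i - mf)]; ring
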